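/- arXiv:1607.07486 — 2 statements merged into one kernel-verified Lean document; each statement's English description precedes it below -/
import Mathlib

section
/- For every μ ∈ C, the curve l(t, μ) = (t, t^2 + μ(t - t^3), t^3, 1 - 3μ(t - t^3)) satisfies: (i) it is legendrian for the form 3y dx - 3x dy + w dz - z dw, i.e., 3y x' - 3x y' + w z' - z w' = 0 identically in t; (ii) l(0, μ) = (0,0,0,1), l(1, μ) = (1,1,1,1), l(-1, μ) = (-1,1,-1,1). -/
/-- For every μ, the curve l(t, μ) = (t, t² + μ(t - t³), t³, 1 - 3μ(t - t³)) is
legendrian for 3y dx - 3x dy + w dz - z dw, and it passes through (0,0,0,1),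
(1,1,1,1), (-1,1,-1,1) at t = 0, 1, -1 respectively. -/
theorem stmt10 (μ : ℂ) :
    (∀ t : ℂ,
      3 * (t ^ 2 + μ * (t - t ^ 3)) * deriv (fun u : ℂ => u) t
        - 3 * t * deriv (fun u : ℂ => u ^ 2 + μ * (u - u ^ 3)) t
        + (1 - 3 * μ * (t - t ^ 3)) * deriv (fun u : ℂ => u ^ 3) t
        - t ^ 3 * deriv (fun u : ℂ => 1 - 3 * μ * (u - u ^ 3)) t = 0) ∧
    ((0 : ℂ), (0 : ℂ) ^ 2 + μ * (0 - (0 : ℂ) ^ 3), (0 : ℂ) ^ 3,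
        1 - 3 * μ * (0 - (0 : ℂ) ^ 3)) = (0, 0, 0, 1) ∧
    ((1 : ℂ), (1 : ℂ) ^ 2 + μ * (1 - (1 : ℂ) ^ 3), (1 : ℂ) ^ 3,
        1 - 3 * μ * (1 - (1 : ℂ) ^ 3)) = (1, 1, 1, 1) ∧
    ((-1 : ℂ), (-1 : ℂ) ^ 2 + μ * (-1 - (-1 : ℂ) ^ 3), (-1 : ℂ) ^ 3,
        1 - 3 * μ * (-1 - (-1 : ℂ) ^ 3)) = (-1, 1, -1, 1) := by
  refine ⟨fun t => ?_, by norm_num, by norm_num, by norm_num⟩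
  have h1 : deriv (fun u : ℂ => u) t = 1 := by simp
  have h2 : deriv (fun u : ℂ => u ^ 2 + μ * (u - u ^ 3)) t
      = 2 * t + μ * (1 - 3 * t ^ 2) := by
    have : HasDerivAt (fun u : ℂ => u ^ 2 + μ * (u - u ^ 3))
        (2 * t + μ * (1 - 3 * t ^ 2)) t := by
      have := ((hasDerivAt_pow 2 t).add
        (((hasDerivAt_id t).sub (hasDerivAt_pow 3 t)).const_mul μ))
      refine this.congr_deriv ?_
      push_cast
      ring
    exact this.deriv
  have h3 : deriv (fun u : ℂ => u ^ 3) t = 3 * t ^ 2 := by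
    simp
  have h4 : deriv (fun u : ℂ => 1 - 3 * μ * (u - u ^ 3)) t
      = -(3 * μ) * (1 - 3 * t ^ 2) := by
    have : HasDerivAt (fun u : ℂ => 1 - 3 * μ * (u - u ^ 3))
        (-(3 * μ) * (1 - 3 * t ^ 2)) t := by
      have := ((hasDerivAt_const t (1 : ℂ)).sub
        (((hasDerivAt_id t).sub (hasDerivAt_pow 3 t)).const_mul (3 * μ)))
      refine this.congr_deriv ?_
      push_cast
      ring
    exact this.deriv
  rw [h1, h2, h3, h4]; ring
end

section
/- Suppose a cubic curve γ(t) = (a_1 t + a_2 t^2 + a_3 t^3, b_1 t + b_2 t^2 + b_3 t^3, c_1 t + c_2 t^2 + c_3 t^3, 1 + d_1 t + d_2 t^2 + d_3 t^3) passes through (1,1,1,1) at t = 1 and through (-1,1,-1,1) at t = -1 (exactly, not just projectively), and is legendrian for 3y dx - 3x dy + w dz - z dw. Then either the third coordinate is identically zero (degenerate case with c_1=a_2=c_2=c_3=0 forcing z ≡ 0), or there exists μ ∈ C such that γ(t) = (t, t^2 + μ(t - t^3), t^3, 1 - 3μ(t - t^3)). -/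
theorem derivCubicAux (p q r t : ℂ) :
    deriv (fun u : ℂ => p*u + q*u^2 + r*u^3) t = p + 2*q*t + 3*r*t^2 := by
  have h1 := (((hasDerivAt_id t).const_mul p).add ((hasDerivAt_pow 2 t).const_mul q)).add
    ((hasDerivAt_pow 3 t).const_mul r)
  have h2 : p * 1 + q * ((2:ℕ) * t ^ (2-1)) + r * ((3:ℕ) * t ^ (3-1))
      = p + 2*q*t + 3*r*t^2 := by push_cast; ring
  exact (h2 ▸ h1).deriv

theorem derivCubicAux' (p q r s t : ℂ) :
    deriv (fun u : ℂ => s + p*u + q*u^2 + r*u^3) t = p + 2*q*t + 3*r*t^2 := by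
  have h1 := ((((hasDerivAt_const t s).add ((hasDerivAt_id t).const_mul p)).add
    ((hasDerivAt_pow 2 t).const_mul q)).add ((hasDerivAt_pow 3 t).const_mul r))
  have h2 : 0 + p * 1 + q * ((2:ℕ) * t ^ (2-1)) + r * ((3:ℕ) * t ^ (3-1))
      = p + 2*q*t + 3*r*t^2 := by push_cast; ring
  exact (h2 ▸ h1).deriv

theorem quarticCoeffsAux (k0 k1 k2 k3 k4 : ℂ)
    (h : ∀ t : ℂ, k0 + k1*t + k2*t^2 + k3*t^3 + k4*t^4 = 0) :
    k0 = 0 ∧ k1 = 0 ∧ k2 = 0 ∧ k3 = 0 ∧ k4 = 0 := by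
  have e0 := h 0
  have e1 := h 1
  have em1 := h (-1)
  have e2 := h 2
  have em2 := h (-2)
  refine ⟨by linear_combination e0,
    by linear_combination (2/3)*e1 - (2/3)*em1 - (1/12)*e2 + (1/12)*em2,
    by linear_combination (2/3)*e1 + (2/3)*em1 - (5/4)*e0 - (1/24)*e2 - (1/24)*em2,
    by linear_combination (1/12)*e2 - (1/12)*em2 - (1/6)*e1 + (1/6)*em1,
    by linear_combination (1/24)*e2 + (1/24)*em2 + (1/4)*e0 - (1/6)*e1 - (1/6)*em1⟩

/-- A rational cubic γ(t) = (a₁t + a₂t² + a₃t³, b₁t + b₂t² + b₃t³,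
c₁t + c₂t² + c₃t³, 1 + d₁t + d₂t² + d₃t³) passing exactly through (1,1,1,1) at
t = 1 and (-1,1,-1,1) at t = -1 which is legendrian for
3y dx - 3x dy + w dz - z dw is either degenerate (z ≡ 0) or equals
(t, t² + μ(t - t³), t³, 1 - 3μ(t - t³)) for some μ ∈ ℂ. -/
theorem stmt11 (a1 a2 a3 b1 b2 b3 c1 c2 c3 d1 d2 d3 : ℂ)
    (hx1 : a1 + a2 + a3 = 1) (hy1 : b1 + b2 + b3 = 1)
    (hz1 : c1 + c2 + c3 = 1) (hw1 : 1 + d1 + d2 + d3 = 1)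
    (hx2 : -a1 + a2 - a3 = -1) (hy2 : -b1 + b2 - b3 = 1)
    (hz2 : -c1 + c2 - c3 = -1) (hw2 : 1 - d1 + d2 - d3 = 1)
    (hleg : ∀ t : ℂ,
      3 * (b1 * t + b2 * t ^ 2 + b3 * t ^ 3) *
          deriv (fun u => a1 * u + a2 * u ^ 2 + a3 * u ^ 3) t
        - 3 * (a1 * t + a2 * t ^ 2 + a3 * t ^ 3) *
          deriv (fun u => b1 * u + b2 * u ^ 2 + b3 * u ^ 3) t
        + (1 + d1 * t + d2 * t ^ 2 + d3 * t ^ 3) *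
          deriv (fun u => c1 * u + c2 * u ^ 2 + c3 * u ^ 3) t
        - (c1 * t + c2 * t ^ 2 + c3 * t ^ 3) *
          deriv (fun u => 1 + d1 * u + d2 * u ^ 2 + d3 * u ^ 3) t = 0) :
    (∀ t : ℂ, c1 * t + c2 * t ^ 2 + c3 * t ^ 3 = 0) ∨
    ∃ μ : ℂ, ∀ t : ℂ,
      a1 * t + a2 * t ^ 2 + a3 * t ^ 3 = t ∧
      b1 * t + b2 * t ^ 2 + b3 * t ^ 3 = t ^ 2 + μ * (t - t ^ 3) ∧
      c1 * t + c2 * t ^ 2 + c3 * t ^ 3 = t ^ 3 ∧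
      1 + d1 * t + d2 * t ^ 2 + d3 * t ^ 3 = 1 - 3 * μ * (t - t ^ 3) := by
  -- turn the legendrian condition into a polynomial identity
  have hpoly : ∀ t : ℂ,
      c1 + (2*c2)*t + (3*(a2*b1 - a1*b2) + 3*c3 + c2*d1 - c1*d2)*t^2
        + (6*(a3*b1 - a1*b3) + 2*c3*d1 - 2*c1*d3)*t^3
        + (3*(a3*b2 - a2*b3) + c3*d2 - c2*d3)*t^4 = 0 := by
    intro t
    have h := hleg t
    rw [derivCubicAux a1 a2 a3 t, derivCubicAux b1 b2 b3 t, derivCubicAux c1 c2 c3 t,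
      derivCubicAux' d1 d2 d3 1 t] at h
    linear_combination h
  obtain ⟨hk0, hk1, hk2, hk3, hk4⟩ := quarticCoeffsAux _ _ _ _ _ hpoly
  have ha2 : a2 = 0 := by linear_combination (hx1 + hx2)/2
  have hb2 : b2 = 1 := by linear_combination (hy1 + hy2)/2
  have hd2 : d2 = 0 := by linear_combination (hw1 + hw2)/2
  have hc1 : c1 = 0 := by linear_combination hk0
  have hc2 : c2 = 0 := by linear_combination hk1/2
  have hc3 : c3 = 1 := by linear_combination hz1 - hc1 - hc2
  have ha1 : a1 = 1 := by
    rw [ha2, hb2, hc1, hc2, hc3] at hk2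
    linear_combination (-1/3)*hk2
  have ha3 : a3 = 0 := by linear_combination hx1 - ha1 - ha2
  have hb3 : b3 = -b1 := by linear_combination (hy1 - hy2)/2
  have hd1 : d1 = -3*b1 := by
    rw [ha1, ha3, hb3, hc1, hc3] at hk3
    linear_combination (1/2)*hk3
  have hd3 : d3 = 3*b1 := by linear_combination hw1 - hd1 - hd2
  refine Or.inr ⟨b1, fun t => ⟨?_, ?_, ?_, ?_⟩⟩
  · rw [ha1, ha2, ha3]; ring
  · rw [hb2, hb3]; ring
  · rw [hc1, hc2, hc3]; ring
  · rw [hd1, hd2, hd3]; ring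
end
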